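/- arXiv:2408.15417 — 2 statements merged into one kernel-verified Lean document; each statement's English description precedes it below -/
import Mathlib

section
/- Define the in-support loss CE_in(L) := −∑_{j=1}^m π̂_j ∑_{z∈S_j} p̂_{j,z} log( exp(L[z,j]) / ∑_{z′∈S_j} exp(L[z′,j]) ). For every L ∈ ℝ^{V×m} and every L′ ∈ F_⊥ satisfying L′[z,j] − L′[v,j] ≥ 1 for all j ∈ {1,…,m}, z ∈ S_j, and v ∉ S_j, one has lim_{R→∞} CE(L + R·L′) = CE_in(L). Moreover, under the sparsity ansatz, CE(L) > CE_in(L) ≥ H for every L ∈ ℝ^{V×m}. -/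
open Filter Topology Matrix

noncomputable section

/-- The NTP cross-entropy loss. -/
def CEloss {V m : ℕ} (piv : Fin m → ℝ) (p : Fin m → Fin V → ℝ)
    (L : Matrix (Fin V) (Fin m) ℝ) : ℝ :=
  - ∑ j, piv j * ∑ z ∈ Finset.univ.filter (fun z => 0 < p j z),
      p j z * Real.log (Real.exp (L z j) / ∑ v, Real.exp (L v j))

/-- The empirical entropy. -/
def entropyH {V m : ℕ} (piv : Fin m → ℝ) (p : Fin m → Fin V → ℝ) : ℝ :=
  - ∑ j, piv j * ∑ z ∈ Finset.univ.filter (fun z => 0 < p j z),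
      p j z * Real.log (p j z)

/-- The in-support NTP loss `CE_in`. -/
def CEin {V m : ℕ} (piv : Fin m → ℝ) (p : Fin m → Fin V → ℝ)
    (L : Matrix (Fin V) (Fin m) ℝ) : ℝ :=
  - ∑ j, piv j * ∑ z ∈ Finset.univ.filter (fun z => 0 < p j z),
      p j z * Real.log (Real.exp (L z j) /
        ∑ z' ∈ Finset.univ.filter (fun z' => 0 < p j z'), Real.exp (L z' j))

/-- The subspace `F`: span of the matrices `(e_z − e_{z'}) ẽ_jᵀ` over `j` and `z, z' ∈ S_j`. -/
def Fsub {V m : ℕ} (p : Fin m → Fin V → ℝ) : Submodule ℝ (Matrix (Fin V) (Fin m) ℝ) :=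
  Submodule.span ℝ {M | ∃ j z z', 0 < p j z ∧ 0 < p j z' ∧
    M = Matrix.single z j 1 - Matrix.single z' j 1}

/-- Frobenius inner product of matrices. -/
def frobInner {a b : ℕ} (X Y : Matrix (Fin a) (Fin b) ℝ) : ℝ := ∑ i, ∑ j, X i j * Y i j

/-- Gibbs' inequality. -/
lemma gibbs' {α : Type*} (S : Finset α) (pp q : α → ℝ) (hpp : ∀ z ∈ S, 0 < pp z)
    (hq : ∀ z ∈ S, 0 < q z) (hps : ∑ z ∈ S, pp z = 1) (hqs : ∑ z ∈ S, q z = 1) :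
    ∑ z ∈ S, pp z * Real.log (q z) ≤ ∑ z ∈ S, pp z * Real.log (pp z) := by
  have h : ∀ z ∈ S, pp z * Real.log (q z) - pp z * Real.log (pp z) ≤ q z - pp z := by
    intro z hz
    have h1 : Real.log (q z / pp z) ≤ q z / pp z - 1 :=
      Real.log_le_sub_one_of_pos (div_pos (hq z hz) (hpp z hz))
    have h2 : Real.log (q z / pp z) = Real.log (q z) - Real.log (pp z) :=
      Real.log_div (hq z hz).ne' (hpp z hz).ne'
    have h3 := hpp z hz
    have h4 := mul_le_mul_of_nonneg_left h1 h3.le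
    have h5 : pp z * (q z / pp z - 1) = q z - pp z := by field_simp
    nlinarith [h4, h5, h2]
  have h6 := Finset.sum_le_sum h
  rw [Finset.sum_sub_distrib] at h6
  have h7 : ∑ z ∈ S, (q z - pp z) = 0 := by rw [Finset.sum_sub_distrib, hps, hqs]; ring
  linarith

lemma sum_log_div' {α : Type*} (S : Finset α) (q f : α → ℝ) (c : ℝ) (hc : 0 < c) :
    ∑ z ∈ S, q z * Real.log (Real.exp (f z) / c)
      = (∑ z ∈ S, q z * f z) - (∑ z ∈ S, q z) * Real.log c := by
  rw [Finset.sum_mul, ← Finset.sum_sub_distrib]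
  refine Finset.sum_congr rfl fun z _ => ?_
  rw [Real.log_div (Real.exp_ne_zero _) hc.ne', Real.log_exp, mul_sub]

lemma frob_std {V m : ℕ} (X : Matrix (Fin V) (Fin m) ℝ) (z : Fin V) (j : Fin m) :
    frobInner X (Matrix.single z j 1) = X z j := by
  have h : ∀ x, (∑ y, if z = x ∧ j = y then X x y else 0) = if z = x then X x j else 0 := by
    intro x; by_cases h : z = x <;> simp [h, Finset.sum_ite_eq]
  simp [frobInner, Matrix.single, h, Finset.sum_ite_eq]

lemma frob_sub {V m : ℕ} (X A B : Matrix (Fin V) (Fin m) ℝ) :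
    frobInner X (A - B) = frobInner X A - frobInner X B := by
  simp [frobInner, Matrix.sub_apply, mul_sub, Finset.sum_sub_distrib]

/-- for any `L` and any `L' ∈ F_⊥` satisfying the margin inequalities,
`CE(L + R L') → CE_in(L)` as `R → ∞`; moreover, under the sparsity ansatz,
`CE(L) > CE_in(L) ≥ H` for every `L`. -/
theorem stmt_14 (V m : ℕ) (hV : 2 ≤ V) (hm : 0 < m)
    (piv : Fin m → ℝ) (hpiv : ∀ j, 0 < piv j) (hpisum : ∑ j, piv j = 1)
    (p : Fin m → Fin V → ℝ) (hp : ∀ j z, 0 ≤ p j z) (hpsum : ∀ j, ∑ z, p j z = 1) :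
    (∀ (L L' : Matrix (Fin V) (Fin m) ℝ),
        (∀ Y ∈ Fsub p, frobInner L' Y = 0) →
        (∀ j z v, 0 < p j z → ¬ 0 < p j v → 1 ≤ L' z j - L' v j) →
        Tendsto (fun R : ℝ => CEloss piv p (L + R • L')) atTop (𝓝 (CEin piv p L))) ∧
    ((∃ j, ∃ v, ¬ 0 < p j v) →
      ∀ L : Matrix (Fin V) (Fin m) ℝ,
        entropyH piv p ≤ CEin piv p L ∧ CEin piv p L < CEloss piv p L) := by
  classical
  set S : Fin m → Finset (Fin V) := fun j => Finset.univ.filter (fun z => 0 < p j z) with hS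
  have hpS : ∀ j, ∑ z ∈ S j, p j z = 1 := by
    intro j
    rw [hS]
    rw [Finset.sum_filter_of_ne (fun z _ hz => lt_of_le_of_ne (hp j z) (Ne.symm hz))]
    exact hpsum j
  have hSne : ∀ j, (S j).Nonempty := by
    intro j
    rcases Finset.eq_empty_or_nonempty (S j) with h | h
    · exfalso; have := hpS j; rw [h] at this; simp at this
    · exact h
  have hDin : ∀ (L : Matrix (Fin V) (Fin m) ℝ) j, 0 < ∑ z ∈ S j, Real.exp (L z j) :=
    fun L j => Finset.sum_pos (fun z _ => Real.exp_pos _) (hSne j)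
  have hDfull : ∀ (L : Matrix (Fin V) (Fin m) ℝ) j, 0 < ∑ v, Real.exp (L v j) :=
    fun L j => Finset.sum_pos (fun z _ => Real.exp_pos _) ⟨⟨0, by omega⟩, Finset.mem_univ _⟩
  constructor
  · -- Part 1: the limit
    intro L L' horth hmargin
    have horthc : ∀ j z z', 0 < p j z → 0 < p j z' → L' z j = L' z' j := by
      intro j z z' hz hz'
      have hmem : (Matrix.single z j (1:ℝ) - Matrix.single z' j 1) ∈ Fsub p :=
        Submodule.subset_span ⟨j, z, z', hz, hz', rfl⟩
      have h0 := horth _ hmem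
      rw [frob_sub, frob_std, frob_std] at h0
      linarith
    have main : ∀ j, ∀ z ∈ S j,
        Tendsto (fun R : ℝ => Real.log (Real.exp ((L + R • L') z j) /
            ∑ v, Real.exp ((L + R • L') v j))) atTop
          (𝓝 (Real.log (Real.exp (L z j) / ∑ z' ∈ S j, Real.exp (L z' j)))) := by
      intro j z hzmem
      have hz : 0 < p j z := by
        rw [hS] at hzmem; exact (Finset.mem_filter.mp hzmem).2
      have hadd : ∀ (R : ℝ) v, (L + R • L') v j = L v j + R * L' v j := by
        intro R v; simp [Matrix.add_apply, Matrix.smul_apply, smul_eq_mul]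
      have hEq : ∀ R : ℝ, Real.exp ((L + R • L') z j) / ∑ v, Real.exp ((L + R • L') v j)
          = Real.exp (L z j) / ∑ v, Real.exp (L v j + R * (L' v j - L' z j)) := by
        intro R
        have hden : ∑ v, Real.exp (L v j + R * (L' v j - L' z j))
            = (∑ v, Real.exp ((L + R • L') v j)) * Real.exp (-(R * L' z j)) := by
          rw [Finset.sum_mul]
          refine Finset.sum_congr rfl fun v _ => ?_
          rw [← Real.exp_add, hadd]; ring_nf
        have hnum : Real.exp (L z j)
            = Real.exp ((L + R • L') z j) * Real.exp (-(R * L' z j)) := by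
          rw [← Real.exp_add, hadd]; ring_nf
        rw [hden, hnum, mul_div_mul_right _ _ (Real.exp_ne_zero _)]
      simp only [hEq]
      have hdent : Tendsto (fun R : ℝ => ∑ v, Real.exp (L v j + R * (L' v j - L' z j)))
          atTop (𝓝 (∑ z' ∈ S j, Real.exp (L z' j))) := by
        have hrw : ∑ z' ∈ S j, Real.exp (L z' j)
            = ∑ v, (if 0 < p j v then Real.exp (L v j) else 0) := by
          rw [hS, Finset.sum_filter]
        rw [hrw]
        refine tendsto_finset_sum _ fun v _ => ?_
        by_cases hv : 0 < p j v
        · have hc : L' v j - L' z j = 0 := by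
            rw [horthc j v z hv hz]; ring
          simp only [hc, mul_zero, add_zero, if_pos hv]
          exact tendsto_const_nhds
        · have hd : L' v j - L' z j < 0 := by
            have := hmargin j z v hz hv; linarith
          have h1 : Tendsto (fun R : ℝ => L v j + R * (L' v j - L' z j)) atTop atBot :=
            tendsto_atBot_add_const_left _ _ (tendsto_id.atTop_mul_const_of_neg hd)
          simp only [if_neg hv]
          exact Real.tendsto_exp_atBot.comp h1
      have hDne : (∑ z' ∈ S j, Real.exp (L z' j)) ≠ 0 := (hDin L j).ne'
      have hfrac := Tendsto.div (tendsto_const_nhds (x := Real.exp (L z j))) hdent hDne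
      have hval : Real.exp (L z j) / ∑ z' ∈ S j, Real.exp (L z' j) ≠ 0 :=
        (div_pos (Real.exp_pos _) (hDin L j)).ne'
      exact (Real.continuousAt_log hval).tendsto.comp hfrac
    simp only [CEloss, CEin]
    refine Tendsto.neg (tendsto_finset_sum _ fun j _ => Tendsto.const_mul _
      (tendsto_finset_sum _ fun z hzmem => Tendsto.const_mul _ (main j z hzmem)))
  · -- Part 2: CE(L) > CE_in(L) ≥ H
    rintro ⟨j0, v0, hv0⟩ L
    -- rewrite CEloss and CEin
    have hCE : CEloss piv p L = - ∑ j, piv j *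
        ((∑ z ∈ S j, p j z * L z j) - Real.log (∑ v, Real.exp (L v j))) := by
      unfold CEloss
      congr 1
      refine Finset.sum_congr rfl fun j _ => ?_
      rw [sum_log_div' _ _ _ _ (hDfull L j), hpS j, one_mul]
    have hCEin : CEin piv p L = - ∑ j, piv j *
        ((∑ z ∈ S j, p j z * L z j) - Real.log (∑ z' ∈ S j, Real.exp (L z' j))) := by
      unfold CEin
      congr 1
      refine Finset.sum_congr rfl fun j _ => ?_
      rw [sum_log_div' _ _ _ _ (hDin L j), hpS j, one_mul]
    constructor
    · -- entropyH ≤ CEin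
      rw [hCEin]
      unfold entropyH
      rw [neg_le_neg_iff]
      refine Finset.sum_le_sum fun j _ => mul_le_mul_of_nonneg_left ?_ (hpiv j).le
      have hgibbs := gibbs' (S j) (p j)
        (fun z => Real.exp (L z j) / ∑ z' ∈ S j, Real.exp (L z' j))
        (fun z hzm => by rw [hS] at hzm; exact (Finset.mem_filter.mp hzm).2)
        (fun z _ => div_pos (Real.exp_pos _) (hDin L j))
        (hpS j)
        (by rw [← Finset.sum_div, div_self (hDin L j).ne'])
      have hlhs : ∑ z ∈ S j, p j z * Real.log
            (Real.exp (L z j) / ∑ z' ∈ S j, Real.exp (L z' j))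
          = (∑ z ∈ S j, p j z * L z j) - Real.log (∑ z' ∈ S j, Real.exp (L z' j)) := by
        rw [sum_log_div' _ _ _ _ (hDin L j), hpS j, one_mul]
      rw [hlhs] at hgibbs
      exact hgibbs
    · -- CEin < CEloss
      rw [hCE, hCEin, neg_lt_neg_iff]
      refine Finset.sum_lt_sum (fun j _ => ?_) ⟨j0, Finset.mem_univ _, ?_⟩
      · refine mul_le_mul_of_nonneg_left ?_ (hpiv j).le
        have hle : Real.log (∑ z' ∈ S j, Real.exp (L z' j))
            ≤ Real.log (∑ v, Real.exp (L v j)) := by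
          refine Real.log_le_log (hDin L j) ?_
          exact Finset.sum_le_sum_of_subset_of_nonneg (Finset.filter_subset _ _)
            (fun v _ _ => (Real.exp_pos _).le)
        linarith
      · refine mul_lt_mul_of_pos_left ?_ (hpiv j0)
        have hlt : Real.log (∑ z' ∈ S j0, Real.exp (L z' j0))
            < Real.log (∑ v, Real.exp (L v j0)) := by
          refine Real.log_lt_log (hDin L j0) ?_
          refine Finset.sum_lt_sum_of_subset (Finset.filter_subset _ _)
            (Finset.mem_univ v0) ?_ (Real.exp_pos _)
            (fun v _ _ => (Real.exp_pos _).le)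
          rw [hS]; simp [hv0]
        linarith
end
end

section
/- Suppose two contexts j ≠ j′ ∈ {1,…,m} have identical support sets, S_j = S_{j′}. If L^mm is any minimizer of the NTP-SVM program, then the matrix obtained from L^mm by replacing both its j-th and j′-th columns with the average (ℓ_j + ℓ_{j′})/2 of those two columns is also a minimizer of the NTP-SVM program; in particular, there exists a minimizer of NTP-SVM whose j-th and j′-th columns are equal. -/
open Filter Topology Matrix

noncomputable section

/-- Nuclear norm: sum of the singular values of `A`. -/
def nuclearNorm {a b : ℕ} (A : Matrix (Fin a) (Fin b) ℝ) : ℝ :=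
  ∑ i, Real.sqrt ((Matrix.isHermitian_conjTranspose_mul_self A).eigenvalues i)

/-- Feasibility for the NTP-SVM program with support sets `Ssets`. -/
def svmFeasibleS {V m : ℕ} (Ssets : Fin m → Finset (Fin V))
    (L : Matrix (Fin V) (Fin m) ℝ) : Prop :=
  (∀ j, ∀ z ∈ Ssets j, ∀ z' ∈ Ssets j, L z j = L z' j) ∧
  (∀ j, ∀ z ∈ Ssets j, ∀ v, v ∉ Ssets j → 1 ≤ L z j - L v j)

namespace NucAux

variable {a b : ℕ}

def opcond (X : Matrix (Fin a) (Fin b) ℝ) : Prop :=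
  ∀ w : Fin b → ℝ, (X *ᵥ w) ⬝ᵥ (X *ᵥ w) ≤ w ⬝ᵥ w

def frob (X A : Matrix (Fin a) (Fin b) ℝ) : ℝ := Matrix.trace (Xᴴ * A)

lemma frob_apply (X A : Matrix (Fin a) (Fin b) ℝ) :
    frob X A = ∑ z, ∑ c, X z c * A z c := by
  rw [frob, Matrix.trace]
  simp only [Matrix.diag_apply, Matrix.mul_apply, Matrix.conjTranspose_apply, star_trivial]
  exact Finset.sum_comm

lemma ctr {n m : ℕ} (M : Matrix (Fin n) (Fin m) ℝ) : Mᴴ = Mᵀ := by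
  ext i j; simp [Matrix.conjTranspose_apply]

lemma dot_self {n m : ℕ} (M : Matrix (Fin n) (Fin m) ℝ) (w : Fin m → ℝ) :
    (M *ᵥ w) ⬝ᵥ (M *ᵥ w) = ((Mᵀ * M) *ᵥ w) ⬝ᵥ w := by
  rw [Matrix.dotProduct_mulVec, ← Matrix.mulVec_transpose, Matrix.mulVec_mulVec]

lemma conj_dot (U M : Matrix (Fin b) (Fin b) ℝ) (w : Fin b → ℝ) :
    ((U * M * star U) *ᵥ w) ⬝ᵥ w
      = (M *ᵥ (star U *ᵥ w)) ⬝ᵥ (star U *ᵥ w) := by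
  have hUt : Uᵀ = star U := by
    rw [Matrix.star_eq_conjTranspose, ctr]
  rw [← Matrix.mulVec_mulVec, ← Matrix.mulVec_mulVec, dotProduct_comm,
    Matrix.dotProduct_mulVec, ← Matrix.mulVec_transpose, hUt, dotProduct_comm]

def lam (A : Matrix (Fin a) (Fin b) ℝ) : Fin b → ℝ :=
  (Matrix.isHermitian_conjTranspose_mul_self A).eigenvalues

def Umat (A : Matrix (Fin a) (Fin b) ℝ) : Matrix (Fin b) (Fin b) ℝ :=
  ((Matrix.isHermitian_conjTranspose_mul_self A).eigenvectorUnitary : Matrix (Fin b) (Fin b) ℝ)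

def AV (A : Matrix (Fin a) (Fin b) ℝ) : Matrix (Fin a) (Fin b) ℝ := A * Umat A

lemma nuclearNorm_eq (A : Matrix (Fin a) (Fin b) ℝ) :
    nuclearNorm A = ∑ i, Real.sqrt (lam A i) := rfl

lemma lam_nonneg (A : Matrix (Fin a) (Fin b) ℝ) (i : Fin b) : 0 ≤ lam A i :=
  Matrix.eigenvalues_conjTranspose_mul_self_nonneg A i

lemma spectral (A : Matrix (Fin a) (Fin b) ℝ) :
    Aᴴ * A = Umat A * Matrix.diagonal (lam A) * star (Umat A) := by
  have h := (Matrix.isHermitian_conjTranspose_mul_self A).spectral_theorem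
  simpa [RCLike.ofReal_real_eq_id, Function.comp, Umat, lam] using h

lemma U_mul_star (A : Matrix (Fin a) (Fin b) ℝ) : Umat A * star (Umat A) = 1 :=
  Matrix.mem_unitaryGroup_iff.mp
    ((Matrix.isHermitian_conjTranspose_mul_self A).eigenvectorUnitary).2

lemma star_mul_U (A : Matrix (Fin a) (Fin b) ℝ) : star (Umat A) * Umat A = 1 :=
  Matrix.mem_unitaryGroup_iff'.mp
    ((Matrix.isHermitian_conjTranspose_mul_self A).eigenvectorUnitary).2

lemma AV_orth (A : Matrix (Fin a) (Fin b) ℝ) :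
    (AV A)ᴴ * AV A = Matrix.diagonal (lam A) := by
  have key : star (Umat A) * (Aᴴ * A) * Umat A = Matrix.diagonal (lam A) := by
    rw [spectral A, Matrix.mul_assoc, Matrix.mul_assoc, star_mul_U, mul_one,
      ← Matrix.mul_assoc, star_mul_U, one_mul]
  calc (AV A)ᴴ * AV A = star (Umat A) * (Aᴴ * A) * Umat A := by
        rw [AV, conjTranspose_mul, ← Matrix.star_eq_conjTranspose (Umat A)]
        simp only [Matrix.mul_assoc]
    _ = Matrix.diagonal (lam A) := key

lemma lam_eq (A : Matrix (Fin a) (Fin b) ℝ) (i : Fin b) :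
    lam A i = ∑ z, (AV A z i) ^ 2 := by
  have := congrArg (fun M : Matrix (Fin b) (Fin b) ℝ => M i i) (AV_orth A)
  simp only [Matrix.mul_apply, Matrix.conjTranspose_apply, star_trivial,
    Matrix.diagonal_apply_eq] at this
  rw [← this]
  exact Finset.sum_congr rfl fun z _ => (pow_two _).symm

lemma U_col_sq (A : Matrix (Fin a) (Fin b) ℝ) (i : Fin b) :
    ∑ c, (Umat A c i) ^ 2 = 1 := by
  have := congrArg (fun M : Matrix (Fin b) (Fin b) ℝ => M i i) (star_mul_U A)
  simp only [Matrix.mul_apply, Matrix.star_apply, star_trivial, Matrix.one_apply_eq] at this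
  rw [← this]
  exact Finset.sum_congr rfl fun c _ => (pow_two _)

/-- von Neumann-type bound. -/
theorem frob_le_nuclearNorm (X A : Matrix (Fin a) (Fin b) ℝ) (hX : opcond X) :
    frob X A ≤ nuclearNorm A := by
  have hA : A = AV A * star (Umat A) := by
    rw [AV, Matrix.mul_assoc, U_mul_star, Matrix.mul_one]
  have h1 : frob X A = Matrix.trace ((X * Umat A)ᴴ * AV A) := by
    rw [frob]
    conv_lhs => rw [hA]
    rw [← Matrix.mul_assoc, Matrix.trace_mul_comm, ← Matrix.mul_assoc, conjTranspose_mul,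
      ← Matrix.star_eq_conjTranspose (Umat A)]
  rw [h1, Matrix.trace, nuclearNorm_eq]
  refine Finset.sum_le_sum fun i _ => ?_
  have hterm : ((X * Umat A)ᴴ * AV A).diag i = ∑ z, (X * Umat A) z i * AV A z i := by
    simp [Matrix.diag_apply, Matrix.mul_apply, Matrix.conjTranspose_apply, star_trivial,
      mul_comm]
  rw [hterm]
  have hcs := Real.sum_mul_le_sqrt_mul_sqrt Finset.univ
    (fun z => (X * Umat A) z i) (fun z => AV A z i)
  refine hcs.trans ?_
  have h2 : ∑ z, ((X * Umat A) z i) ^ 2 ≤ 1 := by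
    have hcol : (fun z => (X * Umat A) z i) = X *ᵥ (fun c => Umat A c i) := by
      funext z; simp [Matrix.mul_apply, Matrix.mulVec, dotProduct]
    have hop := hX (fun c => Umat A c i)
    have hvv : (fun c : Fin b => Umat A c i) ⬝ᵥ (fun c => Umat A c i) = 1 := by
      rw [dotProduct, ← U_col_sq A i]
      exact Finset.sum_congr rfl fun c _ => (pow_two _).symm
    calc ∑ z, ((X * Umat A) z i) ^ 2
        = (X *ᵥ (fun c => Umat A c i)) ⬝ᵥ (X *ᵥ (fun c => Umat A c i)) := by
          rw [dotProduct, ← hcol]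
          exact Finset.sum_congr rfl fun z _ => pow_two _
      _ ≤ 1 := by rw [← hvv]; exact hop
  have h3 : Real.sqrt (∑ z, ((X * Umat A) z i) ^ 2) ≤ 1 := by
    rw [show (1 : ℝ) = Real.sqrt 1 by simp]
    exact Real.sqrt_le_sqrt h2
  have h4 : Real.sqrt (∑ z, (AV A z i) ^ 2) = Real.sqrt (lam A i) := by rw [← lam_eq]
  calc Real.sqrt (∑ z, ((X * Umat A) z i) ^ 2) * Real.sqrt (∑ z, (AV A z i) ^ 2)
      ≤ 1 * Real.sqrt (∑ z, (AV A z i) ^ 2) :=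
        mul_le_mul_of_nonneg_right h3 (Real.sqrt_nonneg _)
    _ = Real.sqrt (lam A i) := by rw [one_mul, h4]

/-- the dual element achieving the nuclear norm. -/
theorem exists_opcond_frob_eq (A : Matrix (Fin a) (Fin b) ℝ) :
    ∃ X : Matrix (Fin a) (Fin b) ℝ, opcond X ∧ frob X A = nuclearNorm A := by
  classical
  set g : Fin b → ℝ := fun i => if lam A i = 0 then 0 else (Real.sqrt (lam A i))⁻¹ with hg
  have hglam : ∀ i, g i * lam A i = Real.sqrt (lam A i) := by
    intro i
    by_cases h : lam A i = 0
    · simp [hg, h]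
    · have hpos : 0 < Real.sqrt (lam A i) :=
        Real.sqrt_pos.mpr (lt_of_le_of_ne (lam_nonneg A i) (Ne.symm h))
      rw [hg]; simp only [h, if_false]
      rw [← Real.mul_self_sqrt (lam_nonneg A i)]
      field_simp
      rw [Real.sqrt_sq hpos.le]
  have hgb : ∀ i, g i * lam A i * g i ≤ 1 := by
    intro i
    by_cases h : lam A i = 0
    · simp [hg, h]
    · have hpos : 0 < Real.sqrt (lam A i) :=
        Real.sqrt_pos.mpr (lt_of_le_of_ne (lam_nonneg A i) (Ne.symm h))
      have : g i * lam A i * g i = 1 := by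
        rw [hglam i, hg]; simp only [h, if_false]
        field_simp
      rw [this]
  set D : Matrix (Fin b) (Fin b) ℝ := Matrix.diagonal (fun i => g i * lam A i * g i) with hD
  refine ⟨AV A * Matrix.diagonal g * star (Umat A), ?_, ?_⟩
  · -- opcond
    intro w
    set X := AV A * Matrix.diagonal g * star (Umat A) with hX
    set t := star (Umat A) *ᵥ w with ht
    have hdiagH : (Matrix.diagonal g)ᴴ = Matrix.diagonal g := by
      rw [Matrix.diagonal_conjTranspose]
      simp [star_trivial]
    have h2 : (AV A)ᴴ * (AV A * (Matrix.diagonal g * star (Umat A)))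
        = Matrix.diagonal (lam A) * (Matrix.diagonal g * star (Umat A)) := by
      rw [← Matrix.mul_assoc, AV_orth]
    have h3 : Matrix.diagonal g * (Matrix.diagonal (lam A) * (Matrix.diagonal g * star (Umat A)))
        = D * star (Umat A) := by
      rw [← Matrix.mul_assoc, ← Matrix.mul_assoc, Matrix.diagonal_mul_diagonal,
        Matrix.diagonal_mul_diagonal, hD]
    have hXX : Xᵀ * X = Umat A * D * star (Umat A) := by
      rw [← ctr, hX, conjTranspose_mul, conjTranspose_mul,
        ← Matrix.star_eq_conjTranspose (star (Umat A)), star_star, hdiagH]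
      simp only [Matrix.mul_assoc]
      rw [h2, h3]
    have e1 : (X *ᵥ w) ⬝ᵥ (X *ᵥ w) = (D *ᵥ t) ⬝ᵥ t := by
      rw [dot_self, hXX, conj_dot, ht]
    have e2 : (D *ᵥ t) ⬝ᵥ t ≤ t ⬝ᵥ t := by
      rw [dotProduct, dotProduct]
      refine Finset.sum_le_sum fun i _ => ?_
      rw [hD, Matrix.mulVec_diagonal]
      calc g i * lam A i * g i * t i * t i = (g i * lam A i * g i) * (t i * t i) := by ring
        _ ≤ 1 * (t i * t i) := mul_le_mul_of_nonneg_right (hgb i) (mul_self_nonneg _)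
        _ = t i * t i := one_mul _
    have e3 : t ⬝ᵥ t = w ⬝ᵥ w := by
      rw [ht, dot_self]
      have : (star (Umat A))ᵀ = Umat A := by
        rw [Matrix.star_eq_conjTranspose, ctr, Matrix.transpose_transpose]
      rw [this, U_mul_star, Matrix.one_mulVec]
    calc (X *ᵥ w) ⬝ᵥ (X *ᵥ w) = (D *ᵥ t) ⬝ᵥ t := e1
      _ ≤ t ⬝ᵥ t := e2
      _ = w ⬝ᵥ w := e3
  · -- frob value
    set X := AV A * Matrix.diagonal g * star (Umat A) with hX
    have hA : A = AV A * star (Umat A) := by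
      rw [AV, Matrix.mul_assoc, U_mul_star, Matrix.mul_one]
    have hdiagH : (Matrix.diagonal g)ᴴ = Matrix.diagonal g := by
      rw [Matrix.diagonal_conjTranspose]
      simp [star_trivial]
    have h2 : (AV A)ᴴ * A = Matrix.diagonal (lam A) * star (Umat A) := by
      have e : (AV A)ᴴ * A = star (Umat A) * (Aᴴ * A) := by
        rw [AV, conjTranspose_mul, ← Matrix.star_eq_conjTranspose (Umat A), Matrix.mul_assoc]
      rw [e, spectral, ← Matrix.mul_assoc, ← Matrix.mul_assoc, star_mul_U, one_mul]
    have hfv : frob X A = Matrix.trace (Matrix.diagonal g * Matrix.diagonal (lam A)) := by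
      rw [frob, hX, conjTranspose_mul, conjTranspose_mul,
        ← Matrix.star_eq_conjTranspose (star (Umat A)), star_star, hdiagH]
      simp only [Matrix.mul_assoc]
      rw [h2]
      calc Matrix.trace (Umat A * (Matrix.diagonal g * (Matrix.diagonal (lam A) * star (Umat A))))
          = Matrix.trace (Umat A * (Matrix.diagonal g * Matrix.diagonal (lam A)) * star (Umat A)) := by
            simp only [Matrix.mul_assoc]
        _ = Matrix.trace (star (Umat A) * (Umat A * (Matrix.diagonal g * Matrix.diagonal (lam A)))) := by
            rw [Matrix.trace_mul_comm]
        _ = Matrix.trace (Matrix.diagonal g * Matrix.diagonal (lam A)) := by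
            rw [← Matrix.mul_assoc, star_mul_U, one_mul]
    rw [hfv, Matrix.diagonal_mul_diagonal, nuclearNorm_eq, Matrix.trace]
    simp only [Matrix.diag_apply, Matrix.diagonal_apply_eq]
    exact Finset.sum_congr rfl fun i _ => hglam i



theorem nuclearNorm_add_le (A B : Matrix (Fin a) (Fin b) ℝ) :
    nuclearNorm (A + B) ≤ nuclearNorm A + nuclearNorm B := by
  obtain ⟨X, hop, heq⟩ := exists_opcond_frob_eq (A + B)
  have hsplit : frob X (A + B) = frob X A + frob X B := by
    rw [frob, frob, frob, Matrix.mul_add, Matrix.trace_add]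
  calc nuclearNorm (A + B) = frob X A + frob X B := by rw [← heq, hsplit]
    _ ≤ nuclearNorm A + nuclearNorm B :=
      add_le_add (frob_le_nuclearNorm X A hop) (frob_le_nuclearNorm X B hop)

theorem nuclearNorm_smul (c : ℝ) (hc : 0 ≤ c) (A : Matrix (Fin a) (Fin b) ℝ) :
    nuclearNorm (c • A) = c * nuclearNorm A := by
  have hsm : ∀ X : Matrix (Fin a) (Fin b) ℝ, frob X (c • A) = c * frob X A := by
    intro X
    rw [frob, frob, Matrix.mul_smul, Matrix.trace_smul, smul_eq_mul]
  apply le_antisymm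
  · obtain ⟨X, hop, heq⟩ := exists_opcond_frob_eq (c • A)
    rw [← heq, hsm]
    exact mul_le_mul_of_nonneg_left (frob_le_nuclearNorm X A hop) hc
  · obtain ⟨X, hop, heq⟩ := exists_opcond_frob_eq A
    calc c * nuclearNorm A = frob X (c • A) := by rw [hsm, heq]
      _ ≤ nuclearNorm (c • A) := frob_le_nuclearNorm X (c • A) hop

theorem nuclearNorm_perm_le (A : Matrix (Fin a) (Fin b) ℝ) (e : Equiv.Perm (Fin b)) :
    nuclearNorm (A.submatrix id e) ≤ nuclearNorm A := by
  obtain ⟨X, hop, heq⟩ := exists_opcond_frob_eq (A.submatrix id e)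
  set Y : Matrix (Fin a) (Fin b) ℝ := X.submatrix id e.symm with hY
  have hfr : frob Y A = frob X (A.submatrix id e) := by
    rw [frob_apply, frob_apply]
    refine Finset.sum_congr rfl fun z _ => ?_
    refine (Fintype.sum_equiv e (fun c => X z c * A z (e c))
      (fun c' => Y z c' * A z c') fun c => ?_).symm
    simp [hY, Matrix.submatrix_apply]
  have hopY : opcond Y := by
    intro w
    have hvec : Y *ᵥ w = X *ᵥ (fun c => w (e c)) := by
      funext z
      simp only [Matrix.mulVec, dotProduct, hY, Matrix.submatrix_apply, id]
      exact (Fintype.sum_equiv e (fun c => X z c * w (e c))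
        (fun c' => X z (e.symm c') * w c') fun c => by simp).symm
    rw [hvec]
    have := hop (fun c => w (e c))
    refine this.trans ?_
    rw [dotProduct, dotProduct]
    exact le_of_eq (Equiv.sum_comp e (fun c => w c * w c))
  calc nuclearNorm (A.submatrix id e) = frob Y A := by rw [hfr, heq]
    _ ≤ nuclearNorm A := frob_le_nuclearNorm Y A hopY

end NucAux

/-- if two contexts `j ≠ j'` have identical support sets, then averaging the
`j`-th and `j'`-th columns of any NTP-SVM minimizer yields another minimizer; in particular
there is a minimizer whose `j`-th and `j'`-th columns coincide. -/
theorem stmt_18 (V m : ℕ) (hV : 2 ≤ V) (hm : 0 < m)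
    (Ssets : Fin m → Finset (Fin V)) (hne : ∀ j, (Ssets j).Nonempty)
    (j j' : Fin m) (hjj : j ≠ j') (hSS : Ssets j = Ssets j')
    (Lmm : Matrix (Fin V) (Fin m) ℝ)
    (hfeas : svmFeasibleS Ssets Lmm)
    (hopt : ∀ L : Matrix (Fin V) (Fin m) ℝ, svmFeasibleS Ssets L →
        nuclearNorm Lmm ≤ nuclearNorm L) :
    (svmFeasibleS Ssets
        (Matrix.of fun z c =>
          if c = j ∨ c = j' then (Lmm z j + Lmm z j') / 2 else Lmm z c) ∧
      ∀ L : Matrix (Fin V) (Fin m) ℝ, svmFeasibleS Ssets L →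
        nuclearNorm (Matrix.of fun z c =>
            if c = j ∨ c = j' then (Lmm z j + Lmm z j') / 2 else Lmm z c) ≤
          nuclearNorm L) ∧
    ∃ L' : Matrix (Fin V) (Fin m) ℝ,
      svmFeasibleS Ssets L' ∧
      (∀ L : Matrix (Fin V) (Fin m) ℝ, svmFeasibleS Ssets L →
          nuclearNorm L' ≤ nuclearNorm L) ∧
      ∀ z : Fin V, L' z j = L' z j' := by
  classical
  set e : Equiv.Perm (Fin m) := Equiv.swap j j' with he
  set B : Matrix (Fin V) (Fin m) ℝ := Lmm.submatrix id e with hB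
  set M : Matrix (Fin V) (Fin m) ℝ :=
    (Matrix.of fun z c =>
      if c = j ∨ c = j' then (Lmm z j + Lmm z j') / 2 else Lmm z c) with hM
  have hSe : ∀ c, Ssets (e c) = Ssets c := by
    intro c
    by_cases h1 : c = j
    · subst h1; rw [he]; rw [Equiv.swap_apply_left]; exact hSS.symm
    · by_cases h2 : c = j'
      · subst h2; rw [he]; rw [Equiv.swap_apply_right]; exact hSS
      · rw [he, Equiv.swap_apply_of_ne_of_ne h1 h2]
  have hMavg : M = (1 / 2 : ℝ) • (Lmm + B) := by
    ext z c
    simp only [hM, Matrix.of_apply, Matrix.smul_apply, Matrix.add_apply, hB,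
      Matrix.submatrix_apply, id, smul_eq_mul]
    by_cases h1 : c = j
    · subst h1
      rw [he, Equiv.swap_apply_left]
      simp; ring
    · by_cases h2 : c = j'
      · subst h2
        rw [he, Equiv.swap_apply_right]
        simp; ring
      · rw [he, Equiv.swap_apply_of_ne_of_ne h1 h2]
        simp [h1, h2]; ring
  have hBfeas : svmFeasibleS Ssets B := by
    constructor
    · intro c z hz z' hz'
      simp only [hB, Matrix.submatrix_apply, id]
      exact hfeas.1 (e c) z (by rw [hSe]; exact hz) z' (by rw [hSe]; exact hz')
    · intro c z hz v hv
      simp only [hB, Matrix.submatrix_apply, id]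
      exact hfeas.2 (e c) z (by rw [hSe]; exact hz) v (by rw [hSe]; exact hv)
  have hMfeas : svmFeasibleS Ssets M := by
    rw [hMavg]
    constructor
    · intro c z hz z' hz'
      simp only [Matrix.smul_apply, Matrix.add_apply, smul_eq_mul]
      rw [hfeas.1 c z hz z' hz', hBfeas.1 c z hz z' hz']
    · intro c z hz v hv
      simp only [Matrix.smul_apply, Matrix.add_apply, smul_eq_mul]
      have h1 := hfeas.2 c z hz v hv
      have h2 := hBfeas.2 c z hz v hv
      linarith
  have hMle : nuclearNorm M ≤ nuclearNorm Lmm := by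
    rw [hMavg]
    rw [NucAux.nuclearNorm_smul (1 / 2 : ℝ) (by norm_num) (Lmm + B)]
    have h1 : nuclearNorm (Lmm + B) ≤ nuclearNorm Lmm + nuclearNorm B :=
      NucAux.nuclearNorm_add_le Lmm B
    have h2 : nuclearNorm B ≤ nuclearNorm Lmm := NucAux.nuclearNorm_perm_le Lmm e
    linarith
  have hMopt : ∀ L : Matrix (Fin V) (Fin m) ℝ, svmFeasibleS Ssets L →
      nuclearNorm M ≤ nuclearNorm L := fun L hL => hMle.trans (hopt L hL)
  refine ⟨⟨hMfeas, hMopt⟩, M, hMfeas, hMopt, fun z => ?_⟩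
  simp [hM]
end
end
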